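/- Fix an integer d ≥ 1 and scalars Z₀, …, Z_d ∈ ℂ. Let M_d(Z) be the Hankel matrix with entry Z_{i+j} in position (i,j) (indices starting at 0), of size (n+1)×(n+1) if d = 2n and of size (n+2)×(n+1) if d = 2n+1. Define Z′ᵢ = ((d+1−i)/(d+1))·Zᵢ for 0 ≤ i ≤ d and Z′_{d+1} = 0, and let M_{d+1}(Z′) be the corresponding Hankel matrix of the next size. If rank M_d(Z) ≤ h, then rank M_{d+1}(Z′) ≤ 2h. -/

import Mathlib

open Matrix Module Submodule

lemma myRank_add_le {m n : Type*} [Fintype m] [Fintype n] (A B : Matrix m n ℂ) :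
    (A + B).rank ≤ A.rank + B.rank := by
  rw [Matrix.rank, Matrix.rank, Matrix.rank, Matrix.mulVecLin_add]
  have hle : LinearMap.range (A.mulVecLin + B.mulVecLin) ≤
      LinearMap.range A.mulVecLin ⊔ LinearMap.range B.mulVecLin := by
    rintro x ⟨v, rfl⟩
    exact Submodule.add_mem_sup ⟨v, rfl⟩ ⟨v, rfl⟩
  exact (Submodule.finrank_mono hle).trans
    (Submodule.finrank_add_le_finrank_add_finrank _ _)

lemma rank_rowScale_le (r c p : ℕ) (Z : ℕ → ℂ) (α : ℕ → ℂ) (hp : ∀ i, p ≤ i → α i = 0) :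
    (Matrix.of fun (i : Fin r) (j : Fin c) => α i * Z (i + j)).rank ≤
    (Matrix.of fun (i : Fin p) (j : Fin c) => Z (i + j)).rank := by
  have key : (Matrix.of fun (i : Fin r) (j : Fin c) => α i * Z (i + j)) =
      (Matrix.of fun (i : Fin r) (k : Fin p) =>
        if (i : ℕ) = (k : ℕ) then α i else 0) *
      (Matrix.of fun (i : Fin p) (j : Fin c) => Z (i + j)) := by
    ext i j
    simp only [Matrix.mul_apply, Matrix.of_apply]
    by_cases h : (i : ℕ) < p
    · rw [Finset.sum_eq_single (⟨(i : ℕ), h⟩ : Fin p)]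
      · simp
      · intro k _ hk
        rw [if_neg, zero_mul]
        intro he
        exact hk (by apply Fin.ext; simp [← he])
      · intro hk; exact absurd (Finset.mem_univ _) hk
    · simp [hp i (le_of_not_gt h)]
  rw [key]
  exact Matrix.rank_mul_le_right _ _

lemma rank_colScale_le (r c q : ℕ) (Z : ℕ → ℂ) (β : ℕ → ℂ) (hq : ∀ j, q ≤ j → β j = 0) :
    (Matrix.of fun (i : Fin r) (j : Fin c) => β j * Z (i + j)).rank ≤
    (Matrix.of fun (i : Fin r) (j : Fin q) => Z (i + j)).rank := by
  have key : (Matrix.of fun (i : Fin r) (j : Fin c) => β j * Z (i + j)) =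
      (Matrix.of fun (i : Fin r) (k : Fin q) => Z (i + k)) *
      (Matrix.of fun (k : Fin q) (j : Fin c) =>
        if (k : ℕ) = (j : ℕ) then β j else 0) := by
    ext i j
    simp only [Matrix.mul_apply, Matrix.of_apply]
    by_cases h : (j : ℕ) < q
    · rw [Finset.sum_eq_single (⟨(j : ℕ), h⟩ : Fin q)]
      · simp [mul_comm]
      · intro k _ hk
        rw [if_neg, mul_zero]
        intro he
        exact hk (by apply Fin.ext; simp [he])
      · intro hk; exact absurd (Finset.mem_univ _) hk
    · simp [hq j (le_of_not_gt h)]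
  rw [key]
  exact Matrix.rank_mul_le_left _ _

lemma rank_hankel_comm (a b : ℕ) (Z : ℕ → ℂ) :
    (Matrix.of fun (i : Fin a) (j : Fin b) => Z (i + j)).rank =
    (Matrix.of fun (i : Fin b) (j : Fin a) => Z (i + j)).rank := by
  rw [← Matrix.rank_transpose]
  congr 1
  ext i j
  simp [Nat.add_comm]

set_option maxHeartbeats 1000000 in
set_option synthInstance.maxHeartbeats 1000000 in
lemma hankel_tall_rank_le (n : ℕ) (Z : ℕ → ℂ) :
    (Matrix.of fun (i : Fin (n+2)) (j : Fin n) => Z (i + j)).rank ≤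
    (Matrix.of fun (i : Fin (n+1)) (j : Fin (n+1)) => Z (i + j)).rank := by
  set L : Matrix (Fin (n+2)) (Fin n) ℂ := Matrix.of fun i j => Z (i + j) with hL
  set M : Matrix (Fin (n+1)) (Fin (n+1)) ℂ := Matrix.of fun i j => Z (i + j) with hM
  set V : Submodule ℂ (Fin (n+2) → ℂ) := Submodule.span ℂ (Set.range Lᵀ) with hV
  set T : Submodule ℂ (Fin (n+1) → ℂ) := Submodule.span ℂ (Set.range Mᵀ) with hT
  rw [Matrix.rank_eq_finrank_span_cols, Matrix.rank_eq_finrank_span_cols]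
  change finrank ℂ V ≤ finrank ℂ T
  by_contra hc
  push_neg at hc
  set P : (Fin (n+2) → ℂ) →ₗ[ℂ] (Fin (n+1) → ℂ) :=
    LinearMap.funLeft ℂ ℂ Fin.castSucc with hP
  set Q : (Fin (n+2) → ℂ) →ₗ[ℂ] (Fin (n+1) → ℂ) :=
    LinearMap.funLeft ℂ ℂ Fin.succ with hQ
  have hPapply : ∀ (v : Fin (n+2) → ℂ) (i : Fin (n+1)), P v i = v i.castSucc := fun _ _ => rfl
  have hQapply : ∀ (v : Fin (n+2) → ℂ) (i : Fin (n+1)), Q v i = v i.succ := fun _ _ => rfl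
  have hmapP : V.map P ≤ T := by
    rw [hV, Submodule.map_span, Submodule.span_le]
    rintro x ⟨y, ⟨j, rfl⟩, rfl⟩
    apply Submodule.subset_span
    refine ⟨j.castSucc, ?_⟩
    funext i
    rw [hPapply]
    simp [hL, hM]
  have hmapQ : V.map Q ≤ T := by
    rw [hV, Submodule.map_span, Submodule.span_le]
    rintro x ⟨y, ⟨j, rfl⟩, rfl⟩
    apply Submodule.subset_span
    refine ⟨j.succ, ?_⟩
    funext i
    rw [hQapply]
    simp only [hL, hM, Matrix.transpose_apply, Matrix.of_apply]
    congr 1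
    simp [Fin.val_succ]
    omega
  have hrn := LinearMap.finrank_range_add_finrank_ker (P.domRestrict V)
  rw [LinearMap.range_domRestrict] at hrn
  have hker : finrank ℂ (LinearMap.ker (P.domRestrict V)) ≤ 1 := by
    have hinj : Function.Injective ((LinearMap.proj (Fin.last (n+1)) :
        (Fin (n+2) → ℂ) →ₗ[ℂ] ℂ).comp
        ((V.subtype).comp (LinearMap.ker (P.domRestrict V)).subtype)) := by
      intro x y hxy
      have hx : P (x.1 : Fin (n+2) → ℂ) = 0 := x.2
      have hy : P (y.1 : Fin (n+2) → ℂ) = 0 := y.2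
      apply Subtype.ext
      apply Subtype.ext
      funext s
      rcases Fin.eq_castSucc_or_eq_last s with ⟨s', rfl⟩ | rfl
      · have hx' : (x.1 : Fin (n+2) → ℂ) s'.castSucc = 0 := congrFun hx s'
        have hy' : (y.1 : Fin (n+2) → ℂ) s'.castSucc = 0 := congrFun hy s'
        rw [hx', hy']
      · exact hxy
    have := LinearMap.finrank_le_finrank_of_injective hinj
    simpa using this
  have hVle : finrank ℂ V ≤ finrank ℂ T + 1 := by
    have := Submodule.finrank_mono hmapP
    omega
  have hVeq : finrank ℂ V = finrank ℂ T + 1 := le_antisymm hVle (by omega)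
  have hmapeq : V.map P = T := by
    apply Submodule.eq_of_le_of_finrank_le hmapP
    have := Submodule.finrank_mono hmapP
    omega
  have hkerne : ∃ v₀ : Fin (n+2) → ℂ, v₀ ∈ V ∧ v₀ ≠ 0 ∧ P v₀ = 0 := by
    have h1 : finrank ℂ (LinearMap.ker (P.domRestrict V)) = 1 := by
      have := Submodule.finrank_mono hmapP
      omega
    have hne : LinearMap.ker (P.domRestrict V) ≠ ⊥ := by
      intro hbot
      rw [hbot, finrank_bot] at h1
      omega
    rw [Submodule.ne_bot_iff] at hne
    obtain ⟨⟨v₀, hv₀V⟩, hv₀ker, hv₀ne⟩ := hne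
    exact ⟨v₀, hv₀V, fun h0 => hv₀ne (Subtype.ext h0), hv₀ker⟩
  obtain ⟨v₀, hv₀V, hv₀ne, hv₀ker⟩ := hkerne
  set t : ℂ := v₀ (Fin.last (n+1)) with htdef
  have hcast0 : ∀ i : Fin (n+1), v₀ i.castSucc = 0 := fun i => congrFun hv₀ker i
  have ht : t ≠ 0 := by
    intro h0
    apply hv₀ne
    funext s
    rcases Fin.eq_castSucc_or_eq_last s with ⟨s', rfl⟩ | rfl
    · exact hcast0 s'
    · exact h0
  have chain : ∀ i : ℕ, i ≤ n + 1 → ∃ v : Fin (n+2) → ℂ, v ∈ V ∧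
      (∀ s : Fin (n+2), (s : ℕ) < n + 1 - i → v s = 0) ∧
      v ⟨n + 1 - i, by omega⟩ = t := by
    intro i
    induction i with
    | zero =>
      intro _
      refine ⟨v₀, hv₀V, ?_, ?_⟩
      · intro s hs
        have hse : s = (⟨(s : ℕ), by omega⟩ : Fin (n+1)).castSucc := by
          apply Fin.ext; simp
        rw [hse]; exact hcast0 _
      · have hle : (⟨n + 1 - 0, by omega⟩ : Fin (n+2)) = Fin.last (n+1) := by
          apply Fin.ext; simp
        rw [hle]
    | succ i ih =>
      intro hi1
      obtain ⟨v, hvV, hvzero, hvt⟩ := ih (by omega)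
      have hQv : Q v ∈ V.map P := by
        rw [hmapeq]
        exact hmapQ (Submodule.mem_map_of_mem hvV)
      obtain ⟨w, hwV, hwPv⟩ := hQv
      refine ⟨w, hwV, ?_, ?_⟩
      · intro s hs
        have hslt : (s : ℕ) < n + 1 := by omega
        have hse : s = (⟨(s : ℕ), hslt⟩ : Fin (n+1)).castSucc := by
          apply Fin.ext; simp
        have h3 : w ((⟨(s : ℕ), hslt⟩ : Fin (n+1)).castSucc) =
            v ((⟨(s : ℕ), hslt⟩ : Fin (n+1)).succ) := congrFun hwPv _
        rw [hse, h3]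
        apply hvzero
        simp only [Fin.val_succ]
        omega
      · have h3 : w ((⟨n + 1 - (i+1), by omega⟩ : Fin (n+1)).castSucc) =
            v ((⟨n + 1 - (i+1), by omega⟩ : Fin (n+1)).succ) := congrFun hwPv _
        have h1 : (⟨n + 1 - (i+1), by omega⟩ : Fin (n+2)) =
            (⟨n + 1 - (i+1), by omega⟩ : Fin (n+1)).castSucc := by
          apply Fin.ext; simp
        have h2 : (⟨n + 1 - (i+1), by omega⟩ : Fin (n+1)).succ =
            (⟨n + 1 - i, by omega⟩ : Fin (n+2)) := by
          apply Fin.ext; simp only [Fin.val_succ]; omega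
        rw [h1, h3, h2, hvt]
  choose u huV huzero hut using fun (i : Fin (n+2)) => chain ((n + 1) - (i : ℕ)) (by omega)
  set R : Matrix (Fin (n+2)) (Fin (n+2)) ℂ := Matrix.of fun i s => u i s with hR
  have hdiag : ∀ i : Fin (n+2), R i i = t := by
    intro i
    have h2 : (⟨n + 1 - (n + 1 - (i : ℕ)), by omega⟩ : Fin (n+2)) = i := by
      apply Fin.ext; simp; omega
    have h3 := hut i
    rw [h2] at h3
    exact h3
  have htri : R.BlockTriangular id := by
    intro i j hij
    exact huzero i j (by simp only [id] at hij; omega)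
  have hdet : R.det = t ^ (n + 2) := by
    rw [Matrix.det_of_upperTriangular htri]
    simp [hdiag]
  have hunit : IsUnit R := by
    rw [Matrix.isUnit_iff_isUnit_det, hdet]
    exact ht.isUnit.pow _
  have hli : LinearIndependent ℂ (fun i => R i) :=
    Matrix.linearIndependent_rows_iff_isUnit.mpr hunit
  have hspan : Submodule.span ℂ (Set.range fun i => R i) ≤ V := by
    rw [Submodule.span_le]
    rintro x ⟨i, rfl⟩
    exact huV i
  have hbig : n + 2 ≤ finrank ℂ V := by
    have hm := Submodule.finrank_mono hspan
    rw [finrank_span_eq_card hli] at hm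
    simpa using hm
  have hsmall : finrank ℂ V ≤ n := by
    have hw := Matrix.rank_le_card_width L
    rw [Matrix.rank_eq_finrank_span_cols] at hw
    change finrank ℂ V ≤ _ at hw
    simpa using hw
  omega

lemma rank_congr {a a' b b' : ℕ} (ha : a' = a) (hb : b' = b) (f : ℕ → ℕ → ℂ) :
    (Matrix.of fun (i : Fin a) (j : Fin b) => f ↑i ↑j).rank =
    (Matrix.of fun (i : Fin a') (j : Fin b') => f ↑i ↑j).rank := by
  subst ha; subst hb; rfl




/-- The Hankel matrix associated with scalars `Z₀, Z₁, Z₂, …`: the entry in position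
`(i, j)` is `Z (i + j)`. For `d = 2n` it has size `(n+1) × (n+1)` and for `d = 2n+1` it has
size `(n+2) × (n+1)`, so the entries used are exactly `Z₀, …, Z_d`. -/
def hankelMatrix (d : ℕ) (Z : ℕ → ℂ) :
    Matrix (Fin (d / 2 + d % 2 + 1)) (Fin (d / 2 + 1)) ℂ :=
  fun i j => Z (i + j)

/-- Given `Z₀, …, Z_d`, set `Z′ᵢ = ((d+1-i)/(d+1))·Zᵢ` for `i ≤ d` and
`Z′_{d+1} = 0` (note `(d+1) - i = 0` in `ℕ` for `i ≥ d+1`). If the Hankel matrix `M_d(Z)`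
has rank at most `h`, then the Hankel matrix `M_{d+1}(Z′)` of the next size has rank at
most `2h`. -/
theorem hankel_rank_le (d : ℕ) (hd : 1 ≤ d) (Z : ℕ → ℂ) (h : ℕ)
    (hZ : (hankelMatrix d Z).rank ≤ h) :
    (hankelMatrix (d + 1) (fun i => (((d + 1 - i : ℕ) : ℂ) / ((d : ℂ) + 1)) * Z i)).rank ≤
      2 * h := by
  rcases Nat.even_or_odd d with ⟨n, hn⟩ | ⟨n, hn⟩
  · -- even case : d = n + n
    subst hn
    have hZ' : (Matrix.of fun (i : Fin (n+1)) (j : Fin (n+1)) => Z (↑i + ↑j)).rank ≤ h := by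
      refine le_trans (le_of_eq ?_) hZ
      exact (rank_congr (by omega) (by omega) (fun a b => Z (a + b))).symm
    have key : (Matrix.of fun (i : Fin (n+2)) (j : Fin (n+1)) =>
        (((n + n + 1 - (↑i + ↑j) : ℕ) : ℂ) / (((n + n : ℕ) : ℂ) + 1)) * Z (↑i + ↑j)).rank
        ≤ 2 * h := by
      have hsplit : (Matrix.of fun (i : Fin (n+2)) (j : Fin (n+1)) =>
          (((n + n + 1 - (↑i + ↑j) : ℕ) : ℂ) / (((n + n : ℕ) : ℂ) + 1)) * Z (↑i + ↑j)) =
          (Matrix.of fun (i : Fin (n+2)) (j : Fin (n+1)) =>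
            (((n + 1 - (i : ℕ) : ℕ) : ℂ) / (((n + n : ℕ) : ℂ) + 1)) * Z (↑i + ↑j)) +
          (Matrix.of fun (i : Fin (n+2)) (j : Fin (n+1)) =>
            (((n - (j : ℕ) : ℕ) : ℂ) / (((n + n : ℕ) : ℂ) + 1)) * Z (↑i + ↑j)) := by
        ext i j
        have hi := i.isLt
        have hj := j.isLt
        have harith : (n + 1 - (i : ℕ)) + (n - (j : ℕ)) = n + n + 1 - ((i : ℕ) + (j : ℕ)) := by
          omega
        simp only [Matrix.add_apply, Matrix.of_apply]
        rw [← harith, Nat.cast_add]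
        ring
      rw [hsplit]
      have h1 : (Matrix.of fun (i : Fin (n+2)) (j : Fin (n+1)) =>
          (((n + 1 - (i : ℕ) : ℕ) : ℂ) / (((n + n : ℕ) : ℂ) + 1)) * Z (↑i + ↑j)).rank ≤ h := by
        refine le_trans (rank_rowScale_le (n+2) (n+1) (n+1) Z
          (fun m => ((n + 1 - m : ℕ) : ℂ) / (((n + n : ℕ) : ℂ) + 1)) ?_) hZ'
        intro m hm
        simp [Nat.sub_eq_zero_of_le hm]
      have h2 : (Matrix.of fun (i : Fin (n+2)) (j : Fin (n+1)) =>
          (((n - (j : ℕ) : ℕ) : ℂ) / (((n + n : ℕ) : ℂ) + 1)) * Z (↑i + ↑j)).rank ≤ h := by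
        refine le_trans (rank_colScale_le (n+2) (n+1) n Z
          (fun m => ((n - m : ℕ) : ℂ) / (((n + n : ℕ) : ℂ) + 1)) ?_) ?_
        · intro m hm
          simp [Nat.sub_eq_zero_of_le hm]
        · exact le_trans (hankel_tall_rank_le n Z) hZ'
      calc _ ≤ _ := myRank_add_le _ _
        _ ≤ h + h := add_le_add h1 h2
        _ = 2 * h := (two_mul h).symm
    refine le_trans (le_of_eq ?_) key
    exact rank_congr (by omega) (by omega)
      (fun a b => (((n + n + 1 - (a + b) : ℕ) : ℂ) / (((n + n : ℕ) : ℂ) + 1)) * Z (a + b))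
  · -- odd case : d = 2 * n + 1
    subst hn
    have hZ' : (Matrix.of fun (i : Fin (n+2)) (j : Fin (n+1)) => Z (↑i + ↑j)).rank ≤ h := by
      refine le_trans (le_of_eq ?_) hZ
      exact (rank_congr (by omega) (by omega) (fun a b => Z (a + b))).symm
    have key : (Matrix.of fun (i : Fin (n+2)) (j : Fin (n+2)) =>
        (((2 * n + 1 + 1 - (↑i + ↑j) : ℕ) : ℂ) / (((2 * n + 1 : ℕ) : ℂ) + 1)) * Z (↑i + ↑j)).rank
        ≤ 2 * h := by
      have hsplit : (Matrix.of fun (i : Fin (n+2)) (j : Fin (n+2)) =>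
          (((2 * n + 1 + 1 - (↑i + ↑j) : ℕ) : ℂ) / (((2 * n + 1 : ℕ) : ℂ) + 1)) * Z (↑i + ↑j)) =
          (Matrix.of fun (i : Fin (n+2)) (j : Fin (n+2)) =>
            (((n + 1 - (i : ℕ) : ℕ) : ℂ) / (((2 * n + 1 : ℕ) : ℂ) + 1)) * Z (↑i + ↑j)) +
          (Matrix.of fun (i : Fin (n+2)) (j : Fin (n+2)) =>
            (((n + 1 - (j : ℕ) : ℕ) : ℂ) / (((2 * n + 1 : ℕ) : ℂ) + 1)) * Z (↑i + ↑j)) := by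
        ext i j
        have hi := i.isLt
        have hj := j.isLt
        have harith : (n + 1 - (i : ℕ)) + (n + 1 - (j : ℕ)) =
            2 * n + 1 + 1 - ((i : ℕ) + (j : ℕ)) := by omega
        simp only [Matrix.add_apply, Matrix.of_apply]
        rw [← harith, Nat.cast_add]
        ring
      rw [hsplit]
      have h1 : (Matrix.of fun (i : Fin (n+2)) (j : Fin (n+2)) =>
          (((n + 1 - (i : ℕ) : ℕ) : ℂ) / (((2 * n + 1 : ℕ) : ℂ) + 1)) * Z (↑i + ↑j)).rank ≤ h := by
        refine le_trans (rank_rowScale_le (n+2) (n+2) (n+1) Z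
          (fun m => ((n + 1 - m : ℕ) : ℂ) / (((2 * n + 1 : ℕ) : ℂ) + 1)) ?_) ?_
        · intro m hm
          simp [Nat.sub_eq_zero_of_le hm]
        · rw [rank_hankel_comm]
          exact hZ'
      have h2 : (Matrix.of fun (i : Fin (n+2)) (j : Fin (n+2)) =>
          (((n + 1 - (j : ℕ) : ℕ) : ℂ) / (((2 * n + 1 : ℕ) : ℂ) + 1)) * Z (↑i + ↑j)).rank ≤ h := by
        refine le_trans (rank_colScale_le (n+2) (n+2) (n+1) Z
          (fun m => ((n + 1 - m : ℕ) : ℂ) / (((2 * n + 1 : ℕ) : ℂ) + 1)) ?_) hZ'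
        intro m hm
        simp [Nat.sub_eq_zero_of_le hm]
      calc _ ≤ _ := myRank_add_le _ _
        _ ≤ h + h := add_le_add h1 h2
        _ = 2 * h := (two_mul h).symm
    refine le_trans (le_of_eq ?_) key
    exact rank_congr (by omega) (by omega)
      (fun a b => (((2 * n + 1 + 1 - (a + b) : ℕ) : ℂ) / (((2 * n + 1 : ℕ) : ℂ) + 1)) * Z (a + b))
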